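/- There is a constant e such that for every binary string x with |x| ≥ 2, every finite set S of binary strings with x ∈ S, and every integer c ≥ 0: if C(S) + ⌊log₂|S|⌋ ≤ C(x) + c (S is c-sufficient for x), then ⌊log₂|S|⌋ − C(x | S) ≤ c + e·⌊log₂|x|⌋ (x is (c + O(log|x|))-typical in S). -/

import Mathlib

/-- Bijective binary encoding of binary strings as natural numbers. -/
def strToNat : List Bool → ℕ
  | [] => 0
  | b :: t => (if b then 2 else 1) + 2 * strToNat t

/-- The partial result of running machine `M` on program `p` and auxiliary input `d`. -/
def evalS (M : Nat.Partrec.Code) (p d : List Bool) : Part ℕ :=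
  M.eval (Nat.pair (strToNat p) (strToNat d))

/-- `M(p, d) = x`. -/
def outputs (M : Nat.Partrec.Code) (p d x : List Bool) : Prop :=
  strToNat x ∈ evalS M p d

/-- `M` halts on program `p` (with empty auxiliary input). -/
def haltsOn (M : Nat.Partrec.Code) (p : List Bool) : Prop :=
  (evalS M p []).Dom

/-- The number of computation steps taken by `M` on program `p` (with empty auxiliary
input); meaningful only when `M` halts on `p`. -/
noncomputable def halttime (M : Nat.Partrec.Code) (p : List Bool) : ℕ :=
  sInf {t | (Nat.Partrec.Code.evaln t M (Nat.pair (strToNat p) 0)).isSome}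

/-- `M` is a universal machine: it simulates every machine `V` via a prefix `w_V`. -/
def Universal (M : Nat.Partrec.Code) : Prop :=
  ∀ V : Nat.Partrec.Code, ∃ w : List Bool, ∀ p y : List Bool,
    (evalS V p y).Dom → evalS M (w ++ p) y = evalS V p y

/-- Plain Kolmogorov complexity `C(x)` on machine `M`. -/
noncomputable def Cpx (M : Nat.Partrec.Code) (x : List Bool) : ℕ :=
  sInf {n | ∃ p : List Bool, p.length = n ∧ outputs M p [] x}

/-- Sophistication of `x` at (integer) significance level `c`. -/
noncomputable def soph (M : Nat.Partrec.Code) (c : ℤ) (x : List Bool) : ℕ :=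
  sInf {n | ∃ p : List Bool, p.length = n ∧ (∀ d : List Bool, (evalS M p d).Dom) ∧
    ∃ d : List Bool, outputs M p d x ∧ (p.length + d.length : ℤ) ≤ (Cpx M x : ℤ) + c}

/-- Logical depth of `x` at significance level `c`. -/
noncomputable def ld (M : Nat.Partrec.Code) (c : ℕ) (x : List Bool) : ℕ :=
  sInf {t | ∃ p : List Bool, p.length ≤ Cpx M x + c ∧ outputs M p [] x ∧ halttime M p = t}

/-- The inverse Busy Beaver function `bb(n)`. -/
noncomputable def bbInv (M : Nat.Partrec.Code) (n : ℕ) : ℕ :=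
  sInf {k | ∃ p : List Bool, p.length = k ∧ haltsOn M p ∧ n ≤ halttime M p}

/-- Busy Beaver logical depth of `x` at significance `c`. -/
noncomputable def ldbb (M : Nat.Partrec.Code) (c : ℕ) (x : List Bool) : ℕ :=
  bbInv M (ld M c x)

/-- The Busy Beaver function `BB(l)`. -/
noncomputable def BB (M : Nat.Partrec.Code) (l : ℕ) : ℕ :=
  sSup {t | ∃ p : List Bool, p.length ≤ l ∧ haltsOn M p ∧ halttime M p = t}

/-- Canonical encoding of a finite set of binary strings: the code of the sorted list
of the codes of its elements. -/
def setCode (S : Finset (List Bool)) : ℕ :=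
  Encodable.encode ((S.image strToNat).sort (· ≤ ·))

/-- Kolmogorov complexity `C(S)` of a finite set of binary strings on machine `M`. -/
noncomputable def CSet (M : Nat.Partrec.Code) (S : Finset (List Bool)) : ℕ :=
  sInf {n | ∃ p : List Bool, p.length = n ∧ setCode S ∈ evalS M p []}

/-- Conditional Kolmogorov complexity `C(x | m)` where the condition is a natural number. -/
noncomputable def CpxCondN (M : Nat.Partrec.Code) (x : List Bool) (m : ℕ) : ℕ :=
  sInf {n | ∃ p : List Bool, p.length = n ∧ strToNat x ∈ M.eval (Nat.pair (strToNat p) m)}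

/-! ### Auxiliary development -/

section AuxDev

open Nat.Partrec (Code)
open Nat.Partrec.Code

/-- Inverse of `strToNat`. -/
def natToStr : ℕ → List Bool
  | 0 => []
  | n+1 => (n % 2 == 1) :: natToStr (n / 2)
decreasing_by exact Nat.lt_succ_of_le (Nat.div_le_self n 2)

lemma strToNat_natToStr : ∀ n, strToNat (natToStr n) = n := by
  intro n
  induction n using Nat.strong_induction_on with
  | _ n ih =>
    match n with
    | 0 => simp [natToStr, strToNat]
    | n+1 =>
      rw [natToStr]
      have h := ih (n / 2) (by omega)
      by_cases hb : n % 2 = 1 <;> simp [strToNat, hb, h] <;> omega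

lemma strToNat_append (u v : List Bool) :
    strToNat (u ++ v) = strToNat u + 2 ^ u.length * strToNat v := by
  induction u with
  | nil => simp [strToNat]
  | cons b t ih =>
    simp only [List.cons_append, strToNat, List.append_eq, ih, List.length_cons, pow_succ]
    ring

lemma strToNat_lb (u : List Bool) : 2 ^ u.length ≤ strToNat u + 1 := by
  induction u with
  | nil => simp [strToNat]
  | cons b t ih =>
    simp only [strToNat, List.length_cons, pow_succ]
    cases b <;> simp <;> omega

lemma strToNat_ub (u : List Bool) : strToNat u + 2 ≤ 2 ^ (u.length + 1) := by
  induction u with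
  | nil => simp [strToNat]
  | cons b t ih =>
    simp only [strToNat, List.length_cons, pow_succ]
    cases b <;> simp <;> omega

/-- Doubling each bit (for self-delimiting encodings). -/
def dbl : List Bool → List Bool
  | [] => []
  | b :: t => b :: b :: dbl t

lemma dbl_length (u : List Bool) : (dbl u).length = 2 * u.length := by
  induction u with
  | nil => simp [dbl]
  | cons b t ih => simp [dbl, ih]; ring

/-- One step of the length-prefix reading loop. -/
def lstep : ℕ × ℕ × ℕ → ℕ × ℕ × ℕ := fun s =>
  if s.1 % 4 = 2 then (s.1 / 4 - 1, s.2.1 + 2 * s.2.2, 2 * s.2.2)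
  else if s.1 % 4 = 3 then (s.1 / 4, s.2.1 + s.2.2, 2 * s.2.2)
  else s

lemma lstep_fix (j n L pw : ℕ) (h : n % 4 = 0) :
    lstep^[j] (n, L, pw) = (n, L, pw) := by
  induction j with
  | zero => rfl
  | succ j ih =>
    rw [Function.iterate_succ_apply]
    have : lstep (n, L, pw) = (n, L, pw) := by
      unfold lstep; simp only []
      rw [if_neg (by omega), if_neg (by omega)]
    rw [this, ih]

lemma lstep_run : ∀ (u : List Bool) (t : List Bool) (L pw j : ℕ), u.length ≤ j →
    lstep^[j] (strToNat (dbl u ++ true :: false :: t), L, pw) =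
      (4 + 4 * strToNat t, L + strToNat u * pw, pw * 2 ^ u.length) := by
  intro u
  induction u with
  | nil =>
    intro t L pw j _
    have hn : strToNat ([] ++ true :: false :: t) = 4 + 4 * strToNat t := by
      simp [strToNat]; ring
    rw [show dbl [] = [] from rfl, hn, lstep_fix j _ L pw (by omega)]
    simp [strToNat]
  | cons b u' ih =>
    intro t L pw j hj
    obtain ⟨j', rfl⟩ : ∃ j', j = j' + 1 := by
      cases j with
      | zero => simp at hj
      | succ j' => exact ⟨j', rfl⟩
    rw [Function.iterate_succ_apply]
    set R := strToNat (dbl u' ++ true :: false :: t) with hR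
    have hlist : dbl (b :: u') ++ true :: false :: t = b :: b :: (dbl u' ++ true :: false :: t) := rfl
    cases b with
    | true =>
      have hn : strToNat (dbl (true :: u') ++ true :: false :: t) = 6 + 4 * R := by
        rw [hlist]; simp [strToNat]; ring
      have hstep : lstep (strToNat (dbl (true :: u') ++ true :: false :: t), L, pw)
          = (R, L + 2 * pw, 2 * pw) := by
        unfold lstep
        rw [hn]
        rw [if_pos (by omega)]
        have harith : (6 + 4 * R) / 4 - 1 = R := by omega
        rw [harith]
      rw [hstep, ih t (L + 2 * pw) (2 * pw) j' (by simpa using Nat.succ_le_succ_iff.mp hj)]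
      simp only [strToNat, List.length_cons, Prod.mk.injEq, pow_succ, if_true, true_and]
      constructor <;> ring
    | false =>
      have hn : strToNat (dbl (false :: u') ++ true :: false :: t) = 3 + 4 * R := by
        rw [hlist]; simp [strToNat]; ring
      have hstep : lstep (strToNat (dbl (false :: u') ++ true :: false :: t), L, pw)
          = (R, L + pw, 2 * pw) := by
        unfold lstep
        rw [hn]
        rw [if_neg (by omega), if_pos (by omega)]
        have harith : (3 + 4 * R) / 4 = R := by omega
        rw [harith]
      rw [hstep, ih t (L + pw) (2 * pw) j' (by simpa using Nat.succ_le_succ_iff.mp hj)]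
      simp only [strToNat, List.length_cons, Prod.mk.injEq, pow_succ, Bool.false_eq_true,
        if_false, true_and]
      constructor <;> ring

/-- Decode a self-delimited pair: returns `(strToNat q, strToNat s)` from the
number coding `dbl (natToStr q.length) ++ true :: false :: (q ++ s)`. -/
def decodeTriple (a : ℕ) : ℕ × ℕ :=
  let st := lstep^[a] (a, 0, 1)
  let r := st.1 / 4 - 1
  let L := st.2.1
  let sN := (r + 1 - 2 ^ L) / 2 ^ L
  (r - 2 ^ L * sN, sN)

lemma decode_arith (qN sN k R : ℕ) (hlb : 2 ^ k ≤ qN + 1) (hub : qN + 2 ≤ 2 ^ (k + 1))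
    (hR : R = qN + 2 ^ k * sN) :
    ((R - 2 ^ k * ((R + 1 - 2 ^ k) / 2 ^ k), (R + 1 - 2 ^ k) / 2 ^ k) : ℕ × ℕ) = (qN, sN) := by
  have hEpos : 0 < 2 ^ k := Nat.pow_pos (by norm_num)
  have hub' : qN + 2 ≤ 2 * 2 ^ k := by
    have : (2:ℕ) ^ (k + 1) = 2 * 2 ^ k := by ring
    omega
  have hsplit : R + 1 - 2 ^ k = (qN + 1 - 2 ^ k) + 2 ^ k * sN := by omega
  have hdiv : (R + 1 - 2 ^ k) / 2 ^ k = sN := by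
    rw [hsplit, Nat.add_mul_div_left _ _ hEpos, Nat.div_eq_of_lt (by omega)]
    omega
  rw [hdiv]
  have : R - 2 ^ k * sN = qN := by omega
  rw [this]

lemma decodeTriple_correct (q s : List Bool) :
    decodeTriple (strToNat (dbl (natToStr q.length) ++ true :: false :: (q ++ s))) =
      (strToNat q, strToNat s) := by
  have hL : strToNat (natToStr q.length) = q.length := strToNat_natToStr _
  have hfuel : (natToStr q.length).length ≤
      strToNat (dbl (natToStr q.length) ++ true :: false :: (q ++ s)) := by
    have h1 := strToNat_lb (dbl (natToStr q.length) ++ true :: false :: (q ++ s))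
    have h2 : (natToStr q.length).length ≤
        (dbl (natToStr q.length) ++ true :: false :: (q ++ s)).length := by
      simp [List.length_append, dbl_length]; omega
    have h3 := Nat.lt_two_pow_self (n := (natToStr q.length).length)
    have h4 := Nat.pow_le_pow_right (show 1 ≤ 2 by norm_num) h2
    omega
  have hrun := lstep_run (natToStr q.length) (q ++ s) 0 1 _ hfuel
  rw [hL] at hrun
  unfold decodeTriple
  rw [hrun]
  simp only [zero_add, Nat.mul_one, one_mul]
  have h4 : (4 + 4 * strToNat (q ++ s)) / 4 - 1 = strToNat (q ++ s) := by omega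
  rw [h4]
  exact decode_arith (strToNat q) (strToNat s) q.length (strToNat (q ++ s))
    (strToNat_lb q) (strToNat_ub q) (strToNat_append q s)

/-! #### Computability -/

lemma primrec_lstep : Primrec lstep := by
  have h1 : Primrec (fun s : ℕ × ℕ × ℕ => s.1) := Primrec.fst
  have h21 : Primrec (fun s : ℕ × ℕ × ℕ => s.2.1) := Primrec.fst.comp Primrec.snd
  have h22 : Primrec (fun s : ℕ × ℕ × ℕ => s.2.2) := Primrec.snd.comp Primrec.snd
  have hm : Primrec (fun s : ℕ × ℕ × ℕ => s.1 % 4) :=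
    Primrec.nat_mod.comp h1 (Primrec.const 4)
  have hd : Primrec (fun s : ℕ × ℕ × ℕ => s.1 / 4) :=
    Primrec.nat_div.comp h1 (Primrec.const 4)
  have hc2 : PrimrecPred (fun s : ℕ × ℕ × ℕ => s.1 % 4 = 2) :=
    Primrec.eq.comp hm (Primrec.const 2)
  have hc3 : PrimrecPred (fun s : ℕ × ℕ × ℕ => s.1 % 4 = 3) :=
    Primrec.eq.comp hm (Primrec.const 3)
  have hdbl : Primrec (fun s : ℕ × ℕ × ℕ => 2 * s.2.2) :=
    Primrec.nat_mul.comp (Primrec.const 2) h22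
  have hb1 : Primrec (fun s : ℕ × ℕ × ℕ => ((s.1 / 4 - 1, s.2.1 + 2 * s.2.2, 2 * s.2.2) : ℕ × ℕ × ℕ)) :=
    ((Primrec.nat_sub.comp hd (Primrec.const 1)).pair
      ((Primrec.nat_add.comp h21 hdbl).pair hdbl))
  have hb2 : Primrec (fun s : ℕ × ℕ × ℕ => ((s.1 / 4, s.2.1 + s.2.2, 2 * s.2.2) : ℕ × ℕ × ℕ)) :=
    (hd.pair ((Primrec.nat_add.comp h21 h22).pair hdbl))
  exact Primrec.ite hc2 hb1 (Primrec.ite hc3 hb2 Primrec.id)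

lemma primrec_decodeTriple : Primrec decodeTriple := by
  have hiter : Primrec (fun a : ℕ => lstep^[a] ((a, 0, 1) : ℕ × ℕ × ℕ)) :=
    Primrec.nat_iterate Primrec.id
      (Primrec.id.pair ((Primrec.const 0).pair (Primrec.const 1)))
      ((primrec_lstep.comp Primrec.snd).to₂)
  have hst1 : Primrec (fun a : ℕ => (lstep^[a] ((a, 0, 1) : ℕ × ℕ × ℕ)).1) :=
    Primrec.fst.comp hiter
  have hr : Primrec (fun a : ℕ => (lstep^[a] ((a, 0, 1) : ℕ × ℕ × ℕ)).1 / 4 - 1) :=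
    Primrec.nat_sub.comp (Primrec.nat_div.comp hst1 (Primrec.const 4)) (Primrec.const 1)
  have hL : Primrec (fun a : ℕ => (lstep^[a] ((a, 0, 1) : ℕ × ℕ × ℕ)).2.1) :=
    Primrec.fst.comp (Primrec.snd.comp hiter)
  have hpow : Primrec₂ ((· ^ ·) : ℕ → ℕ → ℕ) := Primrec₂.unpaired'.1 Nat.Primrec.pow
  have hE : Primrec (fun a : ℕ => 2 ^ (lstep^[a] ((a, 0, 1) : ℕ × ℕ × ℕ)).2.1) :=
    hpow.comp (Primrec.const 2) hL
  have hsN : Primrec (fun a : ℕ =>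
      ((lstep^[a] ((a, 0, 1) : ℕ × ℕ × ℕ)).1 / 4 - 1 + 1 - 2 ^ (lstep^[a] ((a, 0, 1) : ℕ × ℕ × ℕ)).2.1)
        / 2 ^ (lstep^[a] ((a, 0, 1) : ℕ × ℕ × ℕ)).2.1) :=
    Primrec.nat_div.comp
      (Primrec.nat_sub.comp (Primrec.nat_add.comp hr (Primrec.const 1)) hE) hE
  exact (Primrec.nat_sub.comp hr (Primrec.nat_mul.comp hE hsN)).pair hsN

/-- The decoder partial function built on machine `U`. -/
def Fdec (U : Code) : ℕ →. ℕ := fun n =>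
  (U.eval (Nat.pair (decodeTriple n.unpair.1).2 0)).bind fun m =>
    U.eval (Nat.pair (decodeTriple n.unpair.1).1 m)

lemma partrec_Fdec (U : Code) : Partrec (Fdec U) := by
  have hev : Partrec U.eval := Partrec.nat_iff.2 (exists_code.2 ⟨U, rfl⟩)
  have hdec : Primrec (fun n : ℕ => decodeTriple n.unpair.1) :=
    primrec_decodeTriple.comp (Primrec.fst.comp Primrec.unpair)
  have h1 : Computable (fun n : ℕ => Nat.pair (decodeTriple n.unpair.1).2 0) :=
    (Primrec₂.natPair.comp (Primrec.snd.comp hdec) (Primrec.const 0)).to_comp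
  have h2 : Computable (fun p : ℕ × ℕ => Nat.pair (decodeTriple p.1.unpair.1).1 p.2) :=
    (Primrec₂.natPair.comp
      (Primrec.fst.comp (hdec.comp Primrec.fst)) Primrec.snd).to_comp
  exact Partrec.bind (hev.comp h1) ((hev.comp h2).to₂)

lemma log_two_mul_pow (m B : ℕ) (hm : m ≠ 0) :
    Nat.log 2 (m * 2 ^ B) = Nat.log 2 m + B := by
  induction B with
  | zero => simp
  | succ B ih =>
    have : m * 2 ^ (B + 1) = (m * 2 ^ B) * 2 := by ring
    rw [this, Nat.log_mul_base (by norm_num)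
      (by positivity), ih]
    omega

end AuxDev

theorem sufficient_implies_typical :
    ∀ U : Nat.Partrec.Code, Universal U →
    ∃ e : ℕ, ∀ x : List Bool, 2 ≤ x.length → ∀ S : Finset (List Bool), x ∈ S →
      ∀ c : ℕ, CSet U S + Nat.log 2 S.card ≤ Cpx U x + c →
      (Nat.log 2 S.card : ℤ) - CpxCondN U x (setCode S) ≤ (c : ℤ) + e * Nat.log 2 x.length := by
  classical
  intro U hUniv
  -- the machine returning the program part of its input
  have hpF1 : Partrec (fun n : ℕ => Part.some n.unpair.1) := by
    have h : Computable (fun n : ℕ => n.unpair.1) := (Primrec.fst.comp Primrec.unpair).to_comp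
    exact h
  obtain ⟨V₁, hV₁⟩ := Nat.Partrec.Code.exists_code.1 (Partrec.nat_iff.1 hpF1)
  obtain ⟨w₁, hw₁⟩ := hUniv V₁
  -- the decoder machine
  obtain ⟨V₂, hV₂⟩ := Nat.Partrec.Code.exists_code.1 (Partrec.nat_iff.1 (partrec_Fdec U))
  obtain ⟨w₂, hw₂⟩ := hUniv V₂
  refine ⟨w₂.length + 2 * (w₁.length + 1) + 4, ?_⟩
  intro x hx S hxS c hsuff
  -- `w₁ ++ x` computes `x` under any condition `m`
  have hidmem : strToNat x ∈ U.eval (Nat.pair (strToNat (w₁ ++ x)) (setCode S)) := by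
    have hdom : (evalS V₁ x (natToStr (setCode S))).Dom := by
      simp [evalS, hV₁]
    have hval : evalS U (w₁ ++ x) (natToStr (setCode S)) = Part.some (strToNat x) := by
      rw [hw₁ x (natToStr (setCode S)) hdom]
      simp [evalS, hV₁, Nat.unpair_pair]
    have hmem : strToNat x ∈ evalS U (w₁ ++ x) (natToStr (setCode S)) := by
      rw [hval]; exact Part.mem_some _
    unfold evalS at hmem
    rwa [strToNat_natToStr] at hmem
  -- a minimal conditional program q
  have hne : {n | ∃ p : List Bool, p.length = n ∧
      strToNat x ∈ U.eval (Nat.pair (strToNat p) (setCode S))}.Nonempty :=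
    ⟨(w₁ ++ x).length, w₁ ++ x, rfl, hidmem⟩
  obtain ⟨q, hqlen, hq⟩ := Nat.sInf_mem hne
  have hqlen' : q.length = CpxCondN U x (setCode S) := hqlen
  have hkx : CpxCondN U x (setCode S) ≤ (w₁ ++ x).length :=
    Nat.sInf_le ⟨w₁ ++ x, rfl, hidmem⟩
  have hkx' : q.length ≤ w₁.length + x.length := by
    rw [hqlen']; simpa [List.length_append] using hkx
  -- a minimal program s for S
  have hconst : Partrec (fun _ : ℕ => (Part.some (setCode S) : Part ℕ)) := by
    have h : Computable (fun _ : ℕ => setCode S) := Computable.const _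
    exact h
  obtain ⟨V₀, hV₀⟩ := Nat.Partrec.Code.exists_code.1 (Partrec.nat_iff.1 hconst)
  obtain ⟨w₀, hw₀⟩ := hUniv V₀
  have hsmem : setCode S ∈ evalS U w₀ [] := by
    have hdom : (evalS V₀ [] []).Dom := by simp [evalS, hV₀]
    have h := hw₀ [] [] hdom
    rw [List.append_nil] at h
    rw [h]
    simp [evalS, hV₀]
  have hne₀ : {n | ∃ p : List Bool, p.length = n ∧ setCode S ∈ evalS U p []}.Nonempty :=
    ⟨w₀.length, w₀, rfl, hsmem⟩
  obtain ⟨s, hslen, hs⟩ := Nat.sInf_mem hne₀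
  have hslen' : s.length = CSet U S := hslen
  -- the combined program
  set P := dbl (natToStr q.length) ++ true :: false :: (q ++ s) with hP
  have hsN : setCode S ∈ U.eval (Nat.pair (strToNat s) 0) := by
    have : strToNat ([] : List Bool) = 0 := rfl
    unfold evalS at hs
    rwa [this] at hs
  have hFP : strToNat x ∈ Fdec U (Nat.pair (strToNat P) 0) := by
    simp only [Fdec, Nat.unpair_pair]
    rw [hP, decodeTriple_correct q s]
    exact Part.mem_bind_iff.2 ⟨setCode S, hsN, hq⟩
  have hV2P : strToNat x ∈ evalS V₂ P [] := by
    unfold evalS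
    rw [hV₂]
    exact hFP
  have hdomP : (evalS V₂ P []).Dom := Part.dom_iff_mem.2 ⟨_, hV2P⟩
  have hUP := hw₂ P [] hdomP
  have hCx : Cpx U x ≤ (w₂ ++ P).length := by
    apply Nat.sInf_le
    refine ⟨w₂ ++ P, rfl, ?_⟩
    unfold outputs
    rw [hUP]
    exact hV2P
  have hlenP : (w₂ ++ P).length =
      w₂.length + 2 * (natToStr q.length).length + 2 + q.length + s.length := by
    rw [hP]
    simp [List.length_append, dbl_length]
    ring
  -- arithmetic
  have hlog1 : 1 ≤ Nat.log 2 x.length := Nat.log_pos (by norm_num) hx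
  have hlam1 : 2 ^ (natToStr q.length).length ≤ q.length + 1 := by
    have h := strToNat_lb (natToStr q.length)
    rwa [strToNat_natToStr] at h
  have hlam2 : (natToStr q.length).length ≤ Nat.log 2 (q.length + 1) :=
    (Nat.le_log_iff_pow_le (by norm_num) (by omega)).2 hlam1
  have hmono : Nat.log 2 (q.length + 1) ≤ Nat.log 2 (x.length * 2 ^ (w₁.length + 1)) := by
    apply Nat.log_mono_right
    have h2B : w₁.length + 1 < 2 ^ (w₁.length + 1) := Nat.lt_two_pow_self
    have h1 : x.length * (w₁.length + 1 + 1) ≤ x.length * 2 ^ (w₁.length + 1) :=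
      Nat.mul_le_mul_left _ (by omega)
    nlinarith
  have hlogmul : Nat.log 2 (x.length * 2 ^ (w₁.length + 1)) =
      Nat.log 2 x.length + (w₁.length + 1) := log_two_mul_pow _ _ (by omega)
  have hlam : (natToStr q.length).length ≤ Nat.log 2 x.length + (w₁.length + 1) := by omega
  have hmain : Nat.log 2 S.card ≤
      w₂.length + 2 * (natToStr q.length).length + 2 + CpxCondN U x (setCode S) + c := by
    omega
  have hbound : w₂.length + 2 * (natToStr q.length).length + 2 ≤
      (w₂.length + 2 * (w₁.length + 1) + 4) * Nat.log 2 x.length := by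
    nlinarith
  have hfin : Nat.log 2 S.card ≤
      (w₂.length + 2 * (w₁.length + 1) + 4) * Nat.log 2 x.length
        + CpxCondN U x (setCode S) + c := by omega
  have hfinZ : (Nat.log 2 S.card : ℤ) ≤
      ((w₂.length + 2 * (w₁.length + 1) + 4 : ℕ) : ℤ) * (Nat.log 2 x.length : ℤ)
        + (CpxCondN U x (setCode S) : ℤ) + (c : ℤ) := by exact_mod_cast hfin
  push_cast at hfinZ ⊢
  linarith
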